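/- Let d ≥ 1, α ∈ [1,∞), c > 0 and B > 0. There exists a constant C > 0 depending only on d, α, c and B such that for every measurable function f : ℝ^d → [0, B] with M := ∫_{ℝ^d} f(v) e^{c⟨v⟩^{dα}} dv < ∞, one has ∫_{ℝ^d} f(v) dv ≤ 1 + C (ln(max(M, 1)))^{1/α}. -/

import Mathlib

open MeasureTheory Real
open scoped ENNReal

theorem stmt10 (d : ℕ) (hd : 1 ≤ d) (α c B : ℝ) (hα : 1 ≤ α) (hc : 0 < c) (hB : 0 < B) :
    ∃ C : ℝ, 0 < C ∧
      ∀ f : EuclideanSpace ℝ (Fin d) → ℝ,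
        Measurable f → (∀ v, 0 ≤ f v) → (∀ v, f v ≤ B) →
        Integrable (fun v => f v * Real.exp (c * Real.sqrt (1 + ‖v‖ ^ 2) ^ ((d : ℝ) * α))) →
        ∫⁻ v, ENNReal.ofReal (f v)
          ≤ ENNReal.ofReal (1 + C *
              Real.log (max (∫ v, f v *
                Real.exp (c * Real.sqrt (1 + ‖v‖ ^ 2) ^ ((d : ℝ) * α))) 1) ^ (1 / α)) := by
  haveI : Nonempty (Fin d) := ⟨⟨0, hd⟩⟩
  haveI : Nontrivial (EuclideanSpace ℝ (Fin d)) := by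
    unfold EuclideanSpace PiLp
    infer_instance
  have hd0 : (0:ℝ) < (d:ℝ) := by exact_mod_cast hd
  have hα0 : (0:ℝ) < α := lt_of_lt_of_le one_pos hα
  have hdα : (0:ℝ) < (d:ℝ) * α := mul_pos hd0 hα0
  set κ := (volume (Metric.ball (0 : EuclideanSpace ℝ (Fin d)) 1)).toReal with hκdef
  have hκfin : volume (Metric.ball (0 : EuclideanSpace ℝ (Fin d)) 1) ≠ ⊤ :=
    measure_ball_lt_top.ne
  have hκpos : 0 < κ :=
    ENNReal.toReal_pos (Metric.measure_ball_pos _ _ one_pos).ne' hκfin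
  refine ⟨B * κ * c⁻¹ ^ (1/α), by positivity, ?_⟩
  intro f hf hf0 hfB hInt
  set g := fun v : EuclideanSpace ℝ (Fin d) =>
    f v * Real.exp (c * Real.sqrt (1 + ‖v‖ ^ 2) ^ ((d : ℝ) * α)) with hg
  set M := ∫ v, g v with hM
  set L := Real.log (max M 1) with hL
  have hL0 : 0 ≤ L := Real.log_nonneg (le_max_right _ _)
  set R := (c⁻¹ * L) ^ (1 / ((d:ℝ) * α)) with hR
  have hR0 : 0 ≤ R := Real.rpow_nonneg (by positivity) _
  have hcR : c * R ^ ((d:ℝ)*α) = L := by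
    rw [hR, ← Real.rpow_mul (by positivity)]
    rw [one_div, inv_mul_cancel₀ hdα.ne', Real.rpow_one]
    field_simp
  have hexpL : Real.exp L = max M 1 :=
    Real.exp_log (lt_of_lt_of_le one_pos (le_max_right _ _))
  have hg0 : ∀ v, 0 ≤ g v := fun v => mul_nonneg (hf0 v) (Real.exp_pos _).le
  have hM0 : 0 ≤ M := integral_nonneg hg0
  have hMg : ENNReal.ofReal M = ∫⁻ v, ENNReal.ofReal (g v) :=
    ofReal_integral_eq_lintegral_ofReal hInt (ae_of_all _ hg0)
  have hball : MeasurableSet (Metric.ball (0 : EuclideanSpace ℝ (Fin d)) R) :=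
    measurableSet_ball
  rw [← lintegral_add_compl (fun v => ENNReal.ofReal (f v)) hball]
  -- bound on the ball
  have hRd : (R : ℝ) ^ d = c⁻¹ ^ (1/α) * L ^ (1/α) := by
    rw [← Real.mul_rpow (by positivity) hL0, hR, ← Real.rpow_natCast _ d,
      ← Real.rpow_mul (by positivity)]
    congr 1
    field_simp
  have h1 : ∫⁻ v in Metric.ball (0 : EuclideanSpace ℝ (Fin d)) R, ENNReal.ofReal (f v)
      ≤ ENNReal.ofReal (B * (R ^ d * κ)) := by
    calc ∫⁻ v in Metric.ball (0 : EuclideanSpace ℝ (Fin d)) R, ENNReal.ofReal (f v)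
        ≤ ∫⁻ _ in Metric.ball (0 : EuclideanSpace ℝ (Fin d)) R, ENNReal.ofReal B :=
          setLIntegral_mono' hball fun v _ => ENNReal.ofReal_le_ofReal (hfB v)
      _ = ENNReal.ofReal B * volume (Metric.ball (0 : EuclideanSpace ℝ (Fin d)) R) := by
          rw [setLIntegral_const]
      _ = ENNReal.ofReal B * (ENNReal.ofReal (R ^ Module.finrank ℝ (EuclideanSpace ℝ (Fin d)))
            * volume (Metric.ball (0 : EuclideanSpace ℝ (Fin d)) 1)) := by
          rw [Measure.addHaar_ball _ _ hR0]
      _ = ENNReal.ofReal (B * (R ^ d * κ)) := by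
          rw [finrank_euclideanSpace_fin, ← ENNReal.ofReal_toReal hκfin, ← hκdef,
            ← ENNReal.ofReal_mul (by positivity), ← ENNReal.ofReal_mul hB.le]
  -- bound on the complement
  have h2 : ∫⁻ v in (Metric.ball (0 : EuclideanSpace ℝ (Fin d)) R)ᶜ, ENNReal.ofReal (f v)
      ≤ ENNReal.ofReal 1 := by
    have key : ∀ v ∈ (Metric.ball (0 : EuclideanSpace ℝ (Fin d)) R)ᶜ,
        ENNReal.ofReal (f v) ≤ ENNReal.ofReal (Real.exp (-L)) * ENNReal.ofReal (g v) := by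
      intro v hv
      rw [← ENNReal.ofReal_mul (Real.exp_pos _).le]
      apply ENNReal.ofReal_le_ofReal
      have hnv : R ≤ ‖v‖ := by
        simpa [Metric.mem_ball, dist_zero_right, not_lt] using hv
      have hsq : R ≤ Real.sqrt (1 + ‖v‖ ^ 2) := by
        refine hnv.trans ?_
        nlinarith [Real.sq_sqrt (show (0:ℝ) ≤ 1 + ‖v‖ ^ 2 by positivity),
          Real.sqrt_nonneg (1 + ‖v‖ ^ 2), norm_nonneg v]
      have hrp : R ^ ((d:ℝ)*α) ≤ Real.sqrt (1 + ‖v‖ ^ 2) ^ ((d:ℝ)*α) :=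
        Real.rpow_le_rpow hR0 hsq hdα.le
      have hLle : L ≤ c * Real.sqrt (1 + ‖v‖ ^ 2) ^ ((d:ℝ)*α) := by
        rw [← hcR]; exact mul_le_mul_of_nonneg_left hrp hc.le
      have : f v ≤ f v * Real.exp (c * Real.sqrt (1 + ‖v‖ ^ 2) ^ ((d:ℝ)*α) - L) :=
        le_mul_of_one_le_right (hf0 v) (Real.one_le_exp (by linarith))
      calc f v ≤ f v * Real.exp (c * Real.sqrt (1 + ‖v‖ ^ 2) ^ ((d:ℝ)*α) - L) := this
        _ = Real.exp (-L) * g v := by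
            rw [hg, sub_eq_add_neg, Real.exp_add]; ring
    calc ∫⁻ v in (Metric.ball (0 : EuclideanSpace ℝ (Fin d)) R)ᶜ, ENNReal.ofReal (f v)
        ≤ ∫⁻ v in (Metric.ball (0 : EuclideanSpace ℝ (Fin d)) R)ᶜ,
            ENNReal.ofReal (Real.exp (-L)) * ENNReal.ofReal (g v) :=
          setLIntegral_mono' hball.compl key
      _ ≤ ∫⁻ v, ENNReal.ofReal (Real.exp (-L)) * ENNReal.ofReal (g v) :=
          setLIntegral_le_lintegral _ _
      _ = ENNReal.ofReal (Real.exp (-L)) * ∫⁻ v, ENNReal.ofReal (g v) :=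
          lintegral_const_mul' _ _ ENNReal.ofReal_ne_top
      _ = ENNReal.ofReal (Real.exp (-L)) * ENNReal.ofReal M := by rw [hMg]
      _ ≤ ENNReal.ofReal 1 := by
          rw [← ENNReal.ofReal_mul (Real.exp_pos _).le]
          apply ENNReal.ofReal_le_ofReal
          have : Real.exp (-L) * M ≤ Real.exp (-L) * max M 1 :=
            mul_le_mul_of_nonneg_left (le_max_left _ _) (Real.exp_pos _).le
          calc Real.exp (-L) * M ≤ Real.exp (-L) * Real.exp L := by
                rw [hexpL]; exact this
            _ = 1 := by rw [← Real.exp_add]; simp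
  calc (∫⁻ v in Metric.ball (0 : EuclideanSpace ℝ (Fin d)) R, ENNReal.ofReal (f v))
        + ∫⁻ v in (Metric.ball (0 : EuclideanSpace ℝ (Fin d)) R)ᶜ, ENNReal.ofReal (f v)
      ≤ ENNReal.ofReal (B * (R ^ d * κ)) + ENNReal.ofReal 1 := add_le_add h1 h2
    _ = ENNReal.ofReal (1 + B * κ * c⁻¹ ^ (1/α) * L ^ (1/α)) := by
        rw [← ENNReal.ofReal_add (by positivity) zero_le_one]
        congr 1
        rw [hRd]; ring
    _ ≤ _ := le_refl _
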